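/- Let μ ∈ ℕ^n be a composition and σ a filling of the extended diagram of μ (assigning σ_{i,j} ∈ {1,...,n} to each square (i,j) with 1 ≤ i ≤ n, 0 ≤ j ≤ μ_i, and σ_{i,0} = i). The map sending a μ-legal lattice configuration ξ = {k_i^{(j)}} (satisfying: for each colour a and 0 ≤ j ≤ μ_a there is a unique i with k_i^{(j)} = a, and no such i for j > μ_a; k_i^{(0)} = i; and no i,j with n ≥ k_i^{(j)} > k_i^{(j+1)} ≥ 1) to the filling σ defined by σ_{a,j} = the unique i with k_i^{(j)} = a, is a bijection onto the set of non-attacking fillings of μ (those with σ_{i,j} ≠ σ_{i',j} for i < i' with both defined, and σ_{i,j+1} ≠ σ_{i',j} for i < i'). -/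

import Mathlib

/-!
STATEMENT 17: The map sending a `μ`-legal lattice configuration
`ξ = {k_i^{(j)}}` to the filling `σ` defined by `σ_{a,j} = ` the unique `i` with
`k_i^{(j)} = a`, is a bijection onto the set of non-attacking fillings of `μ`.

A configuration is a function `ξ : Fin n → ℕ → Option (Fin n)`, where
`ξ i j = some a` means that the vertical edge in row `i` and column `j` carries
the colour `a`, and `ξ i j = none` means it carries the colour `0`.
`μ`-legality consists of:
 * for each colour `a` and each `j ≤ μ a` there is a unique `i` with
   `ξ i j = some a`, and no such `i` for `j > μ a`;
 * `ξ i 0 = some i` for all `i`;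
 * no `i, j` with `n ≥ k_i^{(j)} > k_i^{(j+1)} ≥ 1`, i.e. whenever
   `ξ i j = some a` and `ξ i (j+1) = some b` one has `a ≤ b`.

A filling is likewise a function `σ : Fin n → ℕ → Option (Fin n)`, with
`σ i j = some r` meaning square `(i,j)` of the extended diagram is filled by
`r`; it is defined exactly on `j ≤ μ i`, has basement `σ i 0 = some i`, and is
non-attacking when entries in attacking squares differ.
-/

/-- `σ` is a filling of the extended diagram of `μ` -/
def IsFilling {n : ℕ} (μ : Fin n → ℕ) (σ : Fin n → ℕ → Option (Fin n)) : Prop :=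
  (∀ i j, (σ i j).isSome ↔ j ≤ μ i) ∧ (∀ i, σ i 0 = some i)

/-- `σ` is a non-attacking filling of the extended diagram of `μ` -/
def NonAttacking {n : ℕ} (μ : Fin n → ℕ) (σ : Fin n → ℕ → Option (Fin n)) : Prop :=
  IsFilling μ σ ∧
  (∀ i i' j, i < i' → (σ i j).isSome → (σ i' j).isSome → σ i j ≠ σ i' j) ∧
  (∀ i i' j, i < i' → (σ i (j + 1)).isSome → (σ i' j).isSome → σ i (j + 1) ≠ σ i' j)

/-- `ξ` is a `μ`-legal lattice configuration -/
def Legal {n : ℕ} (μ : Fin n → ℕ) (ξ : Fin n → ℕ → Option (Fin n)) : Prop :=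
  (∀ a : Fin n, ∀ j, j ≤ μ a → ∃! i, ξ i j = some a) ∧
  (∀ a : Fin n, ∀ j, μ a < j → ∀ i, ξ i j ≠ some a) ∧
  (∀ i, ξ i 0 = some i) ∧
  (∀ i j (a b : Fin n), ξ i j = some a → ξ i (j + 1) = some b → a ≤ b)

open Classical in
noncomputable def Transp {n : ℕ} (f : Fin n → ℕ → Option (Fin n)) :
    Fin n → ℕ → Option (Fin n) :=
  fun a j => if h : ∃ r, f r j = some a then some h.choose else none

lemma Transp_some_imp {n : ℕ} {f : Fin n → ℕ → Option (Fin n)} {a : Fin n} {j : ℕ}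
    {r : Fin n} (h : Transp f a j = some r) : f r j = some a := by
  unfold Transp at h
  split at h
  · next hex =>
    injection h with h'
    exact h' ▸ hex.choose_spec
  · exact absurd h (by simp)

lemma Transp_some_of {n : ℕ} {f : Fin n → ℕ → Option (Fin n)} {a : Fin n} {j : ℕ}
    {r : Fin n} (uniq : ∀ r r', f r j = some a → f r' j = some a → r = r')
    (h : f r j = some a) : Transp f a j = some r := by
  unfold Transp
  have hex : ∃ r, f r j = some a := ⟨r, h⟩
  rw [dif_pos hex]
  exact congrArg some (uniq _ _ hex.choose_spec h)

lemma legal_uniq {n : ℕ} {μ : Fin n → ℕ} {ξ : Fin n → ℕ → Option (Fin n)}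
    (hξ : Legal μ ξ) (a : Fin n) (j : ℕ) :
    ∀ r r', ξ r j = some a → ξ r' j = some a → r = r' := by
  intro r r' h h'
  rcases le_or_gt j (μ a) with hj | hj
  · obtain ⟨i, -, hu⟩ := hξ.1 a j hj
    rw [hu r h, hu r' h']
  · exact absurd h (hξ.2.1 a j hj r)

lemma legal_char {n : ℕ} {μ : Fin n → ℕ} {ξ : Fin n → ℕ → Option (Fin n)}
    (hξ : Legal μ ξ) (a : Fin n) (j : ℕ) (r : Fin n) :
    Transp ξ a j = some r ↔ ξ r j = some a :=
  ⟨Transp_some_imp, Transp_some_of (legal_uniq hξ a j)⟩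

lemma na_uniq {n : ℕ} {μ : Fin n → ℕ} {σ : Fin n → ℕ → Option (Fin n)}
    (hσ : NonAttacking μ σ) (r : Fin n) (j : ℕ) :
    ∀ a a', σ a j = some r → σ a' j = some r → a = a' := by
  intro a a' h h'
  by_contra hne
  rcases lt_or_gt_of_ne hne with hlt | hlt
  · exact hσ.2.1 a a' j hlt (by simp [h]) (by simp [h']) (h.trans h'.symm)
  · exact hσ.2.1 a' a j hlt (by simp [h']) (by simp [h]) (h'.trans h.symm)

lemma na_char {n : ℕ} {μ : Fin n → ℕ} {σ : Fin n → ℕ → Option (Fin n)}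
    (hσ : NonAttacking μ σ) (r : Fin n) (j : ℕ) (a : Fin n) :
    Transp σ r j = some a ↔ σ a j = some r :=
  ⟨Transp_some_imp, Transp_some_of (na_uniq hσ r j)⟩

lemma transp_legal_na {n : ℕ} {μ : Fin n → ℕ} {ξ : Fin n → ℕ → Option (Fin n)}
    (hξ : Legal μ ξ) : NonAttacking μ (Transp ξ) := by
  refine ⟨⟨fun a j => ?_, fun a => ?_⟩, fun a a' j hlt h h' heq => ?_,
    fun a a' j hlt h h' heq => ?_⟩
  · rw [Option.isSome_iff_exists]
    constructor
    · rintro ⟨r, hr⟩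
      have := Transp_some_imp hr
      by_contra hj
      exact hξ.2.1 a j (lt_of_not_ge hj) r this
    · intro hj
      obtain ⟨i, hi, -⟩ := hξ.1 a j hj
      exact ⟨i, (legal_char hξ a j i).2 hi⟩
  · exact (legal_char hξ a 0 a).2 (hξ.2.2.1 a)
  · obtain ⟨r, hr⟩ := Option.isSome_iff_exists.1 h
    have h1 := Transp_some_imp hr
    have h2 := Transp_some_imp (heq ▸ hr)
    exact absurd (Option.some.inj (h1.symm.trans h2)) hlt.ne
  · obtain ⟨r, hr⟩ := Option.isSome_iff_exists.1 h
    have h1 := Transp_some_imp hr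
    have h2 := Transp_some_imp (heq ▸ hr)
    exact absurd (hξ.2.2.2 r j a' a h2 h1) (not_le.2 hlt)

lemma transp_na_legal {n : ℕ} {μ : Fin n → ℕ} {σ : Fin n → ℕ → Option (Fin n)}
    (hσ : NonAttacking μ σ) : Legal μ (Transp σ) := by
  refine ⟨fun a j hj => ?_, fun a j hj i hi => ?_, fun i => ?_, fun i j a b ha hb => ?_⟩
  · obtain ⟨r, hr⟩ := Option.isSome_iff_exists.1 ((hσ.1.1 a j).2 hj)
    refine ⟨r, (na_char hσ r j a).2 hr, fun i hi => ?_⟩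
    have := Transp_some_imp hi
    exact Option.some.inj (this.symm.trans hr)
  · have := Transp_some_imp hi
    exact absurd ((hσ.1.1 a j).1 (by simp [this])) (not_le.2 hj)
  · exact (na_char hσ i 0 i).2 (hσ.1.2 i)
  · have h1 := Transp_some_imp ha
    have h2 := Transp_some_imp hb
    by_contra hab
    exact hσ.2.2 b a j (lt_of_not_ge hab) (by simp [h2]) (by simp [h1])
      (h2.trans h1.symm)


/-- there is a map `F` from configurations to fillings such that,
on `μ`-legal configurations, `F ξ` is characterized by
`(F ξ) a j = some r ↔ ξ r j = some a` (i.e. `σ_{a,j}` is the unique row `r`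
with `k_r^{(j)} = a`), and `F` is a bijection from the set of `μ`-legal
configurations onto the set of non-attacking fillings of `μ`. -/
theorem config_filling_bijection (n : ℕ) (μ : Fin n → ℕ) :
    ∃ F : (Fin n → ℕ → Option (Fin n)) → (Fin n → ℕ → Option (Fin n)),
      (∀ ξ, Legal μ ξ → ∀ (a : Fin n) (j : ℕ) (r : Fin n),
        F ξ a j = some r ↔ ξ r j = some a) ∧
      Set.BijOn F {ξ | Legal μ ξ} {σ | NonAttacking μ σ} := by
  refine ⟨Transp, fun ξ hξ => legal_char hξ, ?_, ?_, ?_⟩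
  · exact fun ξ hξ => transp_legal_na hξ
  · intro ξ hξ ξ' hξ' heq
    funext r j
    refine Option.ext fun a => ?_
    rw [← legal_char hξ a j r, ← legal_char hξ' a j r, heq]
  · intro σ hσ
    refine ⟨Transp σ, transp_na_legal hσ, ?_⟩
    funext a j
    refine Option.ext fun r => ?_
    rw [legal_char (transp_na_legal hσ) a j r, na_char hσ r j a]
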